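/- For each r > 0 there exists a constant C > 0 (depending only on r) such that H(α,r) ≤ C·|α| for all α ∈ ℂ with Re α ≥ 0 and |α| ≥ 1. -/

import Mathlib

/-- `w α r = √(1 + α² sinh² r)` (principal branch). -/
noncomputable def w (α : ℂ) (r : ℝ) : ℂ :=
  (1 + α ^ 2 * (Real.sinh r : ℂ) ^ 2) ^ (1 / 2 : ℂ)

/-- `φ(α,r) = α log((α cosh r + w)/√(α²−1)) + (1/2) log((cosh r − w)/(cosh r + w))`
(principal branches). -/
noncomputable def phi (α : ℂ) (r : ℝ) : ℂ :=
  α * Complex.log ((α * (Real.cosh r : ℂ) + w α r) / ((α ^ 2 - 1) ^ (1 / 2 : ℂ))) +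
    (1 / 2 : ℂ) * Complex.log (((Real.cosh r : ℂ) - w α r) / ((Real.cosh r : ℂ) + w α r))
/-- `H(α,r) = Re[2α log(α cosh r + w) − α log(α²−1)]
  + log|(cosh r − w)/(cosh r + w)|` where `w = √(1 + α² sinh² r)`
(principal branches). -/
noncomputable def H (α : ℂ) (r : ℝ) : ℝ :=
  (2 * α * Complex.log (α * (Real.cosh r : ℂ) + w α r) -
      α * Complex.log (α ^ 2 - 1)).re +
    Real.log (‖((Real.cosh r : ℂ) - w α r) / ((Real.cosh r : ℂ) + w α r)‖)

lemma cpow_half_sq (x : ℂ) : (x ^ (1 / 2 : ℂ)) ^ 2 = x := by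
  rcases eq_or_ne x 0 with h | h
  · simp [h, Complex.zero_cpow (by norm_num : (1 / 2 : ℂ) ≠ 0)]
  · rw [sq, ← Complex.cpow_add _ _ h]
    norm_num

lemma cpow_half_re_nonneg (x : ℂ) : 0 ≤ (x ^ (1 / 2 : ℂ)).re := by
  rcases eq_or_ne x 0 with h | h
  · simp [h, Complex.zero_cpow (by norm_num : (1 / 2 : ℂ) ≠ 0)]
  · rw [Complex.cpow_def_of_ne_zero h, Complex.exp_re]
    apply mul_nonneg (Real.exp_pos _).le
    apply Real.cos_nonneg_of_mem_Icc
    have h1 : (Complex.log x * (1 / 2)).im = x.arg / 2 := by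
      simp [Complex.mul_im, Complex.log_im]
      ring
    rw [h1]
    have h2 := Complex.arg_le_pi x
    have h3 := Complex.neg_pi_lt_arg x
    constructor <;> [linarith; linarith]

/-- negative entropy bound: `-t * log t ≤ 1` for `t ≥ 0`. -/
lemma neg_mul_log_le_one {t : ℝ} (ht : 0 ≤ t) : -(t * Real.log t) ≤ 1 := by
  rcases eq_or_lt_of_le ht with h | h
  · simp [← h]
  · have h1 : Real.log t⁻¹ ≤ t⁻¹ - 1 := Real.log_le_sub_one_of_pos (by positivity)
    rw [Real.log_inv] at h1
    have h2 : t * (-Real.log t) ≤ t * (t⁻¹ - 1) :=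
      mul_le_mul_of_nonneg_left (by linarith) ht
    have h3 : t * (t⁻¹ - 1) = 1 - t := by field_simp
    nlinarith

set_option maxHeartbeats 2000000 in
/-- For each `r > 0` there is `C > 0` with `H(α,r) ≤ C|α|` for all `α` with
`Re α ≥ 0` and `|α| ≥ 1`. -/
theorem H_linear_bound (r : ℝ) (hr : 0 < r) :
    ∃ C > (0 : ℝ), ∀ α : ℂ, 0 ≤ α.re → 1 ≤ ‖α‖ →
      H α r ≤ C * ‖α‖ := by
  have hs : 0 < Real.sinh r := Real.sinh_pos_iff.2 hr
  have hc : 1 ≤ Real.cosh r := Real.one_le_cosh r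
  set c := Real.cosh r with hcdef
  set s := Real.sinh r with hsdef
  set C₁ : ℝ := c + s + 1 with hC₁def
  have hC₁2 : 2 ≤ C₁ := by simp only [hC₁def]; linarith
  have hlogC₁0 : 0 < Real.log C₁ := Real.log_pos (by linarith)
  have hlog2C₁ : Real.log 2 ≤ Real.log C₁ := Real.log_le_log two_pos hC₁2
  have hlog2pos : 0 < Real.log 2 := Real.log_pos one_lt_two
  have hlog2le : Real.log 2 ≤ 1 := by
    have := Real.log_le_sub_one_of_pos (by norm_num : (0:ℝ) < 2); linarith
  have hpi := Real.pi_pos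
  refine ⟨3 * Real.pi + 6 * Real.log C₁ + 10, by nlinarith, ?_⟩
  intro α hre habs
  have hA1 : 1 ≤ ‖α‖ := habs
  set A := ‖α‖ with hAdef
  have hA0 : 0 < A := by linarith
  have haA : α.re ≤ A := Complex.re_le_norm α
  have hbA : |α.im| ≤ A := Complex.abs_im_le_norm α
  have hlogA0 : 0 ≤ Real.log A := Real.log_nonneg hA1
  have hlogAA : Real.log A ≤ A := by
    have := Real.log_le_sub_one_of_pos hA0; linarith
  have hcs : ((c : ℂ)) ^ 2 - (s : ℂ) ^ 2 = 1 := by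
    have h := Real.cosh_sq_sub_sinh_sq r
    rw [← hcdef, ← hsdef] at h
    exact_mod_cast h
  by_cases hα1 : α = 1
  · -- special case α = 1
    subst hα1
    have hw1 : w 1 r = (c : ℂ) := by
      have h1 : (1 : ℂ) + 1 ^ 2 * (s : ℂ) ^ 2 = ((c ^ 2 : ℝ) : ℂ) := by
        push_cast
        linear_combination -hcs
      have h2 : ((1 : ℂ) / 2) = (((1 / 2 : ℝ)) : ℂ) := by norm_num
      rw [w, ← hsdef, h1, h2, ← Complex.ofReal_cpow (by positivity) (1 / 2 : ℝ),
        ← Real.sqrt_eq_rpow, Real.sqrt_sq (by linarith : (0:ℝ) ≤ c)]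
    have hAone : A = 1 := by rw [hAdef, norm_one]
    have h2c : ((c : ℂ)) + (c : ℂ) = ((2 * c : ℝ) : ℂ) := by push_cast; ring
    have hHval : H 1 r = 2 * Real.log (2 * c) := by
      rw [H, hw1, ← hcdef]
      simp only [one_mul, one_pow, sub_self, Complex.log_zero, mul_zero, sub_zero,
        zero_div, norm_zero, Real.log_zero, add_zero, mul_one]
      rw [h2c]
      simp [Complex.mul_re, Complex.log_re, Complex.log_im, Complex.norm_real, Real.norm_eq_abs,
        abs_of_pos (by linarith : (0:ℝ) < 2 * c)]
      rw [abs_of_pos (show (0:ℝ) < c by linarith)]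
    have hlog2c : Real.log (2 * c) ≤ 2 * Real.log C₁ := by
      have h1 : 2 * c ≤ C₁ ^ 2 := by nlinarith
      have h2 := Real.log_le_log (by linarith : (0:ℝ) < 2 * c) h1
      rw [Real.log_pow] at h2
      push_cast at h2
      linarith
    rw [hHval, hAone]
    linarith
  · -- main case : α ≠ 1
    set W := w α r with hWdef
    have hW2 : W ^ 2 = 1 + α ^ 2 * (s : ℂ) ^ 2 := cpow_half_sq _
    have hWre : 0 ≤ W.re := cpow_half_re_nonneg _
    have hα2 : α ^ 2 - 1 ≠ 0 := by
      intro h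
      have h2 : (α - 1) * (α + 1) = 0 := by linear_combination h
      rcases mul_eq_zero.1 h2 with h3 | h3
      · exact hα1 (by linear_combination h3)
      · have h4 : α = -1 := by linear_combination h3
        rw [h4] at hre
        simp at hre
        linarith
    set z : ℂ := α * (c : ℂ) + W with hzdef
    have hzz : z * (α * (c : ℂ) - W) = α ^ 2 - 1 := by
      rw [hzdef]
      linear_combination α ^ 2 * hcs - hW2
    have hzne : z ≠ 0 := by
      intro h
      apply hα2
      rw [← hzz, h, zero_mul]
    have habsz_pos : 0 < ‖z‖ := norm_pos_iff.2 hzne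
    have hcw : ((c : ℂ) - W) * ((c : ℂ) + W) = (s : ℂ) ^ 2 * (1 - α ^ 2) := by
      linear_combination hcs - hW2
    have hcWne : ((c : ℂ) + W) ≠ 0 := by
      intro h
      have h1 : ((c : ℂ) + W).re = c + W.re := by simp
      rw [h] at h1
      simp at h1
      linarith
    have habscW1 : c ≤ ‖(c : ℂ) + W‖ := by
      have h1 : ((c : ℂ) + W).re = c + W.re := by simp
      have h2 := Complex.re_le_norm ((c : ℂ) + W)
      rw [h1] at h2
      linarith
    have hcmWne : ((c : ℂ) - W) ≠ 0 := by
      intro h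
      rw [h, zero_mul] at hcw
      have hs2 : ((s : ℂ)) ^ 2 ≠ 0 := pow_ne_zero _ (Complex.ofReal_ne_zero.2 (ne_of_gt hs))
      rcases mul_eq_zero.1 hcw.symm with h3 | h3
      · exact hs2 h3
      · exact hα2 (by linear_combination -h3)
    have habsW : ‖W‖ ≤ 1 + A * s := by
      have h1 : (‖W‖) ^ 2 = ‖1 + α ^ 2 * (s : ℂ) ^ 2‖ := by
        rw [← norm_pow, hW2]
      have h2 : ‖1 + α ^ 2 * (s : ℂ) ^ 2‖ ≤ 1 + A ^ 2 * s ^ 2 := by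
        calc ‖1 + α ^ 2 * (s : ℂ) ^ 2‖
            ≤ ‖(1:ℂ)‖ + ‖α ^ 2 * (s : ℂ) ^ 2‖ := norm_add_le _ _
          _ = 1 + A ^ 2 * s ^ 2 := by
              rw [norm_one, norm_mul, norm_pow, norm_pow, Complex.norm_real, Real.norm_eq_abs,
                abs_of_pos hs]
      have h3 : (‖W‖) ^ 2 ≤ (1 + A * s) ^ 2 := by
        linarith [h1, h2, mul_nonneg hA0.le hs.le, sq_nonneg (A * s),
          mul_nonneg (mul_nonneg hA0.le hA0.le) (mul_nonneg hs.le hs.le)]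
      have h4 := Real.sqrt_le_sqrt h3
      rwa [Real.sqrt_sq (norm_nonneg W),
        Real.sqrt_sq (by positivity : (0:ℝ) ≤ 1 + A * s)] at h4
    have habszA : ‖z‖ ≤ C₁ * A := by
      have h1 : ‖z‖ ≤ ‖α * (c : ℂ)‖ + ‖W‖ :=
        norm_add_le _ _
      have h2 : ‖α * (c : ℂ)‖ = A * c := by
        rw [norm_mul, Complex.norm_real, Real.norm_eq_abs, abs_of_pos (by linarith : (0:ℝ) < c)]
      rw [h2] at h1
      have h3 : A * c + (1 + A * s) ≤ C₁ * A := by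
        rw [hC₁def]
        linarith [hA1]
      linarith
    have habs21 : ‖α ^ 2 - 1‖ ≤ 2 * A ^ 2 := by
      have h1 := norm_add_le (α ^ 2) (-1)
      rw [← sub_eq_add_neg, norm_neg, norm_one, norm_pow] at h1
      nlinarith [hA1, hA0]
    have habs_low : A * ‖α - 1‖ ≤ ‖α ^ 2 - 1‖ := by
      have h1 : α ^ 2 - 1 = (α + 1) * (α - 1) := by ring
      rw [h1, norm_mul]
      have h4 : A ^ 2 = α.re ^ 2 + α.im ^ 2 := by
        rw [hAdef, Complex.sq_norm, Complex.normSq_apply]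
        ring
      have h3 : (‖α + 1‖) ^ 2 = (α.re + 1) ^ 2 + α.im ^ 2 := by
        rw [Complex.sq_norm, Complex.normSq_apply]
        simp
        ring
      have h2 : A ≤ ‖α + 1‖ := by
        have h5 : A ^ 2 ≤ (‖α + 1‖) ^ 2 := by
          rw [h3, h4]
          nlinarith [hre]
        have h6 := Real.sqrt_le_sqrt h5
        rwa [Real.sqrt_sq hA0.le, Real.sqrt_sq (norm_nonneg _)] at h6
      exact mul_le_mul_of_nonneg_right h2 (norm_nonneg _)
    have habsm1pos : 0 < ‖α - 1‖ :=
      norm_pos_iff.2 (sub_ne_zero.2 hα1)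
    set Lz := Real.log (‖z‖) with hLzdef
    set L₂ := Real.log (‖α ^ 2 - 1‖) with hL2def
    have h2A : 0 < ‖α ^ 2 - 1‖ := norm_pos_iff.2 hα2
    have hLzA : Lz ≤ Real.log C₁ + Real.log A := by
      rw [hLzdef, ← Real.log_mul (by linarith : C₁ ≠ 0) (ne_of_gt hA0)]
      exact Real.log_le_log habsz_pos habszA
    have hL2up : L₂ ≤ Real.log 2 + 2 * Real.log A := by
      have h1 : Real.log (2 * A ^ 2) = Real.log 2 + 2 * Real.log A := by
        rw [Real.log_mul two_ne_zero (by positivity), Real.log_pow]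
        push_cast
        ring
      rw [hL2def, ← h1]
      exact Real.log_le_log h2A habs21
    have hL2low : Real.log A + Real.log (‖α - 1‖) ≤ L₂ := by
      rw [hL2def, ← Real.log_mul (ne_of_gt hA0) (ne_of_gt habsm1pos)]
      exact Real.log_le_log (by positivity) habs_low
    -- decomposition of H
    have hHone : H α r = (2 * α * Complex.log z - α * Complex.log (α ^ 2 - 1)).re +
        Real.log (‖((c : ℂ) - W) / ((c : ℂ) + W)‖) := rfl
    have hret : (2 * α * Complex.log z - α * Complex.log (α ^ 2 - 1)).re
        = 2 * α.re * Lz - 2 * α.im * z.arg - α.re * L₂ + α.im * (α ^ 2 - 1).arg := by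
      rw [hLzdef, hL2def]
      simp [Complex.sub_re, Complex.mul_re, Complex.mul_im, Complex.log_re, Complex.log_im]
      ring
    have habs_prod : ‖(c : ℂ) - W‖ * ‖(c : ℂ) + W‖
        = s ^ 2 * ‖α ^ 2 - 1‖ := by
      rw [← norm_mul, hcw, norm_mul]
      have e1 : ‖(s : ℂ) ^ 2‖ = s ^ 2 := by
        rw [norm_pow, Complex.norm_real, Real.norm_eq_abs, abs_of_pos hs]
      have e2 : ‖1 - α ^ 2‖ = ‖α ^ 2 - 1‖ :=
        norm_sub_rev 1 (α ^ 2)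
      rw [e1, e2]
    have hlograt : Real.log (‖((c : ℂ) - W) / ((c : ℂ) + W)‖)
        = 2 * Real.log s + L₂ - 2 * Real.log (‖(c : ℂ) + W‖) := by
      rw [norm_div, Real.log_div (ne_of_gt (norm_pos_iff.2 hcmWne))
        (ne_of_gt (norm_pos_iff.2 hcWne))]
      have h1 : Real.log (‖(c : ℂ) - W‖) + Real.log (‖(c : ℂ) + W‖)
          = 2 * Real.log s + L₂ := by
        rw [← Real.log_mul (ne_of_gt (norm_pos_iff.2 hcmWne))
          (ne_of_gt (norm_pos_iff.2 hcWne)), habs_prod,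
          Real.log_mul (by positivity) (ne_of_gt h2A), Real.log_pow]
        push_cast
        rw [hL2def]
      linarith
    have hHdecomp : H α r = 2 * α.re * Lz - 2 * α.im * z.arg + (1 - α.re) * L₂
        + α.im * (α ^ 2 - 1).arg + 2 * Real.log s
        - 2 * Real.log (‖(c : ℂ) + W‖) := by
      rw [hHone, hret, hlograt]
      ring
    -- bounds on the argument terms
    obtain ⟨hb1, hb2⟩ := abs_le.1 hbA
    obtain ⟨hz1, hz2⟩ := abs_le.1 (Complex.abs_arg_le_pi z)
    obtain ⟨hq1, hq2⟩ := abs_le.1 (Complex.abs_arg_le_pi (α ^ 2 - 1))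
    have harg1 : -(2 * α.im * z.arg) ≤ 2 * (Real.pi * A) := by
      linarith [mul_nonneg (by linarith : (0:ℝ) ≤ A - α.im) (by linarith : (0:ℝ) ≤ Real.pi - z.arg),
        mul_nonneg (by linarith : (0:ℝ) ≤ A + α.im) (by linarith : (0:ℝ) ≤ Real.pi + z.arg)]
    have harg2 : α.im * (α ^ 2 - 1).arg ≤ Real.pi * A := by
      linarith [mul_nonneg (by linarith : (0:ℝ) ≤ A - α.im) (by linarith : (0:ℝ) ≤ Real.pi + (α ^ 2 - 1).arg),
        mul_nonneg (by linarith : (0:ℝ) ≤ A + α.im) (by linarith : (0:ℝ) ≤ Real.pi - (α ^ 2 - 1).arg)]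
    have hlogs : Real.log s ≤ Real.log C₁ := by
      apply Real.log_le_log hs
      rw [hC₁def]
      linarith
    have hlogcW : 0 ≤ Real.log (‖(c : ℂ) + W‖) :=
      Real.log_nonneg (by linarith)
    -- the main estimate on F = 2a Lz + (1-a) L₂
    have hF : 2 * α.re * Lz + (1 - α.re) * L₂ ≤ (4 * Real.log C₁ + Real.log 2 + 3) * A := by
      rcases le_or_gt α.re 1 with hcase | hcase
      · have t1 : 2 * α.re * Lz ≤ 2 * α.re * (Real.log C₁ + Real.log A) :=
          mul_le_mul_of_nonneg_left hLzA (by linarith)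
        have t2 : (1 - α.re) * L₂ ≤ (1 - α.re) * (Real.log 2 + 2 * Real.log A) :=
          mul_le_mul_of_nonneg_left hL2up (by linarith)
        linarith [t1, t2, mul_le_mul_of_nonneg_right haA hlogC₁0.le,
          mul_nonneg hre hlog2pos.le,
          mul_nonneg hlog2pos.le (by linarith : (0:ℝ) ≤ A - 1),
          mul_nonneg hlogC₁0.le hA0.le,
          mul_nonneg hlogC₁0.le (by linarith : (0:ℝ) ≤ A - 1), hlogAA, hA0.le]
      · have ht0 : (0:ℝ) ≤ α.re - 1 := by linarith
        have hge : α.re - 1 ≤ ‖α - 1‖ := by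
          have h1 := Complex.re_le_norm (α - 1)
          have h2 : (α - 1).re = α.re - 1 := by simp
          linarith [h2 ▸ h1]
        have hkey : -((α.re - 1) * Real.log (‖α - 1‖)) ≤ 1 := by
          rcases eq_or_lt_of_le ht0 with h | h
          · rw [← h]
            norm_num
          · have hlm : Real.log (α.re - 1) ≤ Real.log (‖α - 1‖) :=
              Real.log_le_log h hge
            have h5 := neg_mul_log_le_one (le_of_lt h)
            have h6 := mul_le_mul_of_nonneg_left hlm ht0
            linarith
        have hG : (α.re - 1) * (Real.log A - Real.log (‖α - 1‖))
            ≤ (Real.log 2 + 1) * A := by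
          rcases le_or_gt 2 A with hA2' | hA2'
          · have hA12 : A / 2 ≤ ‖α - 1‖ := by
              have h1 : A ≤ ‖α - 1‖ + 1 := by
                have h2 : α = (α - 1) + 1 := by ring
                calc A = ‖(α - 1) + 1‖ := by rw [hAdef, ← h2]
                  _ ≤ ‖α - 1‖ + ‖(1:ℂ)‖ := norm_add_le _ _
                  _ = ‖α - 1‖ + 1 := by rw [norm_one]
              linarith
            have h2 : Real.log A - Real.log (‖α - 1‖) ≤ Real.log 2 := by
              have h3 := Real.log_le_log (by linarith : (0:ℝ) < A / 2) hA12
              rw [Real.log_div (ne_of_gt hA0) two_ne_zero] at h3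
              linarith
            have h4 : (α.re - 1) * (Real.log A - Real.log (‖α - 1‖))
                ≤ (α.re - 1) * Real.log 2 := mul_le_mul_of_nonneg_left h2 ht0
            have h5 : (α.re - 1) * Real.log 2 ≤ A * Real.log 2 :=
              mul_le_mul_of_nonneg_right (by linarith) hlog2pos.le
            linarith [hA0.le]
          · have h5 : α.re - 1 ≤ 1 := by linarith
            have h6 : Real.log A ≤ Real.log 2 := Real.log_le_log hA0 (le_of_lt hA2')
            have h7 : (α.re - 1) * Real.log A ≤ 1 * Real.log 2 :=
              mul_le_mul h5 h6 hlogA0 zero_le_one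
            have h8 : 0 ≤ (Real.log 2 + 1) * (A - 1) :=
              mul_nonneg (by linarith) (by linarith)
            linarith [hkey]
        have hbr : 2 * Lz - L₂ ≤ 2 * Real.log C₁
            + (Real.log A - Real.log (‖α - 1‖)) := by linarith
        have hbr2 : (α.re - 1) * (2 * Lz - L₂) ≤ (α.re - 1) * (2 * Real.log C₁)
            + (α.re - 1) * (Real.log A - Real.log (‖α - 1‖)) := by
          have h9 := mul_le_mul_of_nonneg_left hbr ht0
          linarith
        have hc1 : (α.re - 1) * (2 * Real.log C₁) ≤ A * (2 * Real.log C₁) :=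
          mul_le_mul_of_nonneg_right (by linarith) (by linarith)
        have hFeq : 2 * α.re * Lz + (1 - α.re) * L₂
            = 2 * Lz + (α.re - 1) * (2 * Lz - L₂) := by ring
        rw [hFeq]
        linarith [hbr2, hc1, hG, hLzA, hlogAA,
          mul_nonneg hlogC₁0.le (by linarith : (0:ℝ) ≤ A - 1),
          mul_nonneg hlog2pos.le (by linarith : (0:ℝ) ≤ A - 1)]
    -- combine everything
    rw [hHdecomp]
    linarith [hF, harg1, harg2, hlogs, hlogcW,
      mul_nonneg hlogC₁0.le (by linarith : (0:ℝ) ≤ A - 1),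
      mul_nonneg hpi.le (by linarith : (0:ℝ) ≤ A - 1), hA0.le,
      mul_le_mul_of_nonneg_right hlog2le hA0.le]
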